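/- Every connected graph G of order n ≥ 3 is an induced subgraph of some locally Dirac graph. -/

import Mathlib

noncomputable def locDeg {V : Type*} (G : SimpleGraph V) (v u : V) : ℕ :=
  (G.neighborSet v ∩ G.neighborSet u).ncard

noncomputable def degN {V : Type*} (G : SimpleGraph V) (v : V) : ℕ :=
  (G.neighborSet v).ncard

def LocallyDirac {V : Type*} (G : SimpleGraph V) : Prop :=
  ∀ v u : V, G.Adj v u → degN G v ≤ 2 * locDeg G v u

section aux
variable {V : Type} [Fintype V] (G : SimpleGraph V)

/-- join of G with complete graph on second copy of V -/
def HJ : SimpleGraph (V ⊕ V) where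
  Adj x y := match x, y with
    | Sum.inl a, Sum.inl b => G.Adj a b
    | Sum.inr a, Sum.inr b => a ≠ b
    | _, _ => True
  symm := ⟨by rintro (a|a) (b|b) h <;> simp_all [ne_comm] <;> exact h.symm⟩
  loopless := ⟨by rintro (a|a) h <;> simp_all⟩

@[simp] lemma HJ_ll {a b : V} : (HJ G).Adj (Sum.inl a) (Sum.inl b) ↔ G.Adj a b := Iff.rfl
@[simp] lemma HJ_lr {a b : V} : (HJ G).Adj (Sum.inl a) (Sum.inr b) := trivial
@[simp] lemma HJ_rl {a b : V} : (HJ G).Adj (Sum.inr a) (Sum.inl b) := trivial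
@[simp] lemma HJ_rr {a b : V} : (HJ G).Adj (Sum.inr a) (Sum.inr b) ↔ a ≠ b := Iff.rfl

lemma ncard_inl_union_inr (s t : Set V) :
    ((Sum.inl '' s ∪ Sum.inr '' t : Set (V ⊕ V))).ncard = s.ncard + t.ncard := by
  rw [Set.ncard_union_eq, Set.ncard_image_of_injective _ Sum.inl_injective,
    Set.ncard_image_of_injective _ Sum.inr_injective]
  rw [Set.disjoint_iff_forall_ne]
  rintro x ⟨a, -, rfl⟩ y ⟨b, -, rfl⟩
  simp

end aux

theorem stmt1 {V : Type} [Fintype V] (G : SimpleGraph V) (hc : G.Connected)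
    (h3 : 3 ≤ Fintype.card V) :
    ∃ (W : Type) (_ : Fintype W) (H : SimpleGraph W),
      LocallyDirac H ∧ Nonempty (G ↪g H) := by
  set n := Fintype.card V with hn
  have hdle : ∀ v : V, (G.neighborSet v).ncard ≤ n := fun v => by
    calc (G.neighborSet v).ncard ≤ (Set.univ : Set V).ncard :=
      Set.ncard_le_ncard (Set.subset_univ _) (Set.toFinite _)
    _ = n := by rw [Set.ncard_univ, Nat.card_eq_fintype_card]
  have hd1 : ∀ v : V, 1 ≤ (G.neighborSet v).ncard := by
    intro v
    have : (G.neighborSet v).Nonempty := by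
      have : ∃ w, w ≠ v := by
        have : Nontrivial V := Fintype.one_lt_card_iff_nontrivial.mp (by omega)
        exact exists_ne v
      obtain ⟨w, hw⟩ := this
      obtain ⟨p⟩ := hc.preconnected v w
      cases p with
      | nil => exact absurd rfl hw.symm
      | cons h _ => exact ⟨_, h⟩
    exact (Set.ncard_pos (Set.toFinite _)).mpr this
  refine ⟨V ⊕ V, inferInstance, HJ G, ?_, ⟨⟨⟨Sum.inl, Sum.inl_injective⟩, fun {a b} => by simp⟩⟩⟩
  -- neighbor set computations
  have Nl : ∀ v : V, (HJ G).neighborSet (Sum.inl v)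
      = Sum.inl '' G.neighborSet v ∪ Sum.inr '' Set.univ := by
    intro v; ext (w|w) <;> simp [SimpleGraph.neighborSet]
  have Nr : ∀ v : V, (HJ G).neighborSet (Sum.inr v)
      = Sum.inl '' Set.univ ∪ Sum.inr '' ({v}ᶜ) := by
    intro v; ext (w|w) <;> simp [SimpleGraph.neighborSet, ne_comm]
  have huniv : (Set.univ : Set V).ncard = n := by rw [Set.ncard_univ, Nat.card_eq_fintype_card]
  have hcompl1 : ∀ v : V, (({v}ᶜ : Set V)).ncard = n - 1 := by
    intro v
    have := Set.ncard_add_ncard_compl ({v} : Set V)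
    rw [Set.ncard_singleton, Nat.card_eq_fintype_card] at this
    omega
  have hcompl2 : ∀ v u : V, v ≠ u → (({v, u}ᶜ : Set V)).ncard = n - 2 := by
    intro v u hvu
    have := Set.ncard_add_ncard_compl ({v, u} : Set V)
    rw [Set.ncard_pair hvu, Nat.card_eq_fintype_card] at this
    omega
  rintro (v|v) (u|u) hadj
  · -- inl inl
    have key : (HJ G).neighborSet (Sum.inl v) ∩ (HJ G).neighborSet (Sum.inl u)
        = Sum.inl '' (G.neighborSet v ∩ G.neighborSet u) ∪ Sum.inr '' Set.univ := by
      rw [Nl, Nl]; ext (w|w) <;> simp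
    unfold degN locDeg
    rw [key, Nl, ncard_inl_union_inr, ncard_inl_union_inr, huniv]
    have := hdle v
    omega
  · have key : (HJ G).neighborSet (Sum.inl v) ∩ (HJ G).neighborSet (Sum.inr u)
        = Sum.inl '' (G.neighborSet v) ∪ Sum.inr '' ({u}ᶜ) := by
      rw [Nl, Nr]; ext (w|w) <;> simp
    unfold degN locDeg
    rw [key, Nl, ncard_inl_union_inr, ncard_inl_union_inr, huniv, hcompl1]
    have := hd1 v
    omega
  · have key : (HJ G).neighborSet (Sum.inr v) ∩ (HJ G).neighborSet (Sum.inl u)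
        = Sum.inl '' (G.neighborSet u) ∪ Sum.inr '' ({v}ᶜ) := by
      rw [Nl, Nr]; ext (w|w) <;> simp
    unfold degN locDeg
    rw [key, Nr, ncard_inl_union_inr, ncard_inl_union_inr, huniv, hcompl1]
    have := hd1 u
    have := hdle u
    omega
  · have hvu : v ≠ u := by simpa using hadj
    have key : (HJ G).neighborSet (Sum.inr v) ∩ (HJ G).neighborSet (Sum.inr u)
        = Sum.inl '' Set.univ ∪ Sum.inr '' ({v, u}ᶜ) := by
      rw [Nr, Nr]; ext (w|w) <;> simp [and_comm]
    unfold degN locDeg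
    rw [key, Nr, ncard_inl_union_inr, ncard_inl_union_inr, huniv, hcompl1, hcompl2 _ _ hvu]
    omega
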